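/- Let T be the matrix diag-block [[1,1],[0,1]] ⊕ I₂ in Sp(4,𝔽₂) (i.e. the 4×4 identity with an extra 1 in position (1,2)). Then T is not a commutator in Sp(4,𝔽₂): there exist no X, Y in Sp(4,𝔽₂) with T = X·Y·X⁻¹·Y⁻¹. -/

import Mathlib

open Matrix

/-- The symplectic form matrix on `(𝔽₂)⁴` (signs are irrelevant mod 2). -/
def J4 : Matrix (Fin 4) (Fin 4) (ZMod 2) :=
  !![0, 1, 0, 0; 1, 0, 0, 0; 0, 0, 0, 1; 0, 0, 1, 0]

/-- The elementary transvection `T = I₄ + E₁₂`. -/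
def T4 : Matrix (Fin 4) (Fin 4) (ZMod 2) :=
  !![1, 1, 0, 0; 0, 1, 0, 0; 0, 0, 1, 0; 0, 0, 0, 1]

/-- Strict upper part of `J4`. -/
def U4 : Matrix (Fin 4) (Fin 4) (ZMod 2) :=
  !![0, 1, 0, 0; 0, 0, 0, 0; 0, 0, 0, 1; 0, 0, 0, 0]

/-- Matrix of the quadratic form with diagonal `d` refining `J4`. -/
def Mq (d : Fin 4 → ZMod 2) : Matrix (Fin 4) (Fin 4) (ZMod 2) :=
  Matrix.diagonal d + U4

/-- Action of a matrix on (diagonals of) quadratic forms. -/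
def fQ (X : Matrix (Fin 4) (Fin 4) (ZMod 2)) (d : Fin 4 → ZMod 2) : Fin 4 → ZMod 2 :=
  fun i => (Xᵀ * Mq d * X) i i

/-- The quadratic form of a matrix. -/
def Qf (M : Matrix (Fin 4) (Fin 4) (ZMod 2)) (v : Fin 4 → ZMod 2) : ZMod 2 :=
  v ⬝ᵥ M.mulVec v

/-- `d` is the diagonal of an odd-type quadratic form. -/
def Podd (d : Fin 4 → ZMod 2) : Prop :=
  (Finset.univ.filter fun v : Fin 4 → ZMod 2 => Qf (Mq d) v = 0).card = 6

instance : DecidablePred Podd := fun d => by unfold Podd; infer_instance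

lemma qcongr (M N : Matrix (Fin 4) (Fin 4) (ZMod 2)) (h1 : ∀ i, M i i = N i i)
    (h2 : M + Mᵀ = N + Nᵀ) (v : Fin 4 → ZMod 2) : Qf M v = Qf N v := by
  have h : ∀ j k, M j k + M k j = N j k + N k j := by
    intro j k
    have := congrFun (congrFun h2 j) k
    simpa [Matrix.add_apply, Matrix.transpose_apply] using this
  simp only [Qf, dotProduct, Matrix.mulVec, Fin.sum_univ_four]
  linear_combination (v 0 * v 1) * h 0 1 + (v 0 * v 2) * h 0 2 + (v 0 * v 3) * h 0 3 +
    (v 1 * v 2) * h 1 2 + (v 1 * v 3) * h 1 3 + (v 2 * v 3) * h 2 3 +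
    (v 0 * v 0) * h1 0 + (v 1 * v 1) * h1 1 + (v 2 * v 2) * h1 2 + (v 3 * v 3) * h1 3

set_option maxHeartbeats 1000000 in
lemma diag_eq (Y M : Matrix (Fin 4) (Fin 4) (ZMod 2)) (i : Fin 4) :
    (Yᵀ * M * Y) i i = Qf M (fun j => Y j i) := by
  simp only [Qf, dotProduct, Matrix.mulVec, Matrix.mul_apply, Matrix.transpose_apply,
    Fin.sum_univ_four]
  ring

set_option maxHeartbeats 1600000 in
lemma mulVec_q (M X : Matrix (Fin 4) (Fin 4) (ZMod 2)) (w : Fin 4 → ZMod 2) :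
    Qf M (X.mulVec w) = Qf (Xᵀ * M * X) w := by
  simp only [Qf, dotProduct, Matrix.mulVec, Matrix.mul_apply, Matrix.transpose_apply,
    Fin.sum_univ_four]
  ring

lemma Mq_diag (d : Fin 4 → ZMod 2) (i : Fin 4) : Mq d i i = d i := by
  have hU : U4 i i = 0 := by fin_cases i <;> rfl
  simp [Mq, Matrix.add_apply, hU]

lemma Mq_add_transpose (d : Fin 4 → ZMod 2) : Mq d + (Mq d)ᵀ = J4 := by
  have h2 : ∀ a : ZMod 2, a + a = 0 := by decide
  have hU : U4 + U4ᵀ = J4 := by decide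
  have hdd : Matrix.diagonal d + Matrix.diagonal d = (0 : Matrix (Fin 4) (Fin 4) (ZMod 2)) := by
    ext i j
    rcases eq_or_ne i j with h | h
    · subst h; simp [Matrix.add_apply, Matrix.diagonal_apply_eq, h2]
    · simp [Matrix.add_apply, Matrix.diagonal_apply_ne _ h]
  calc Mq d + (Mq d)ᵀ
      = (Matrix.diagonal d + Matrix.diagonal d) + (U4 + U4ᵀ) := by
        rw [Mq, Matrix.transpose_add, Matrix.diagonal_transpose]; abel
    _ = J4 := by rw [hdd, hU, zero_add]

lemma symm_conj {X : Matrix (Fin 4) (Fin 4) (ZMod 2)} (hX : Xᵀ * J4 * X = J4)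
    (d : Fin 4 → ZMod 2) :
    Xᵀ * Mq d * X + (Xᵀ * Mq d * X)ᵀ = J4 := by
  have : (Xᵀ * Mq d * X)ᵀ = Xᵀ * (Mq d)ᵀ * X := by
    rw [Matrix.transpose_mul, Matrix.transpose_mul]
    simp only [Matrix.mul_assoc, Matrix.transpose_transpose]
  rw [this, ← Matrix.add_mul, ← Matrix.mul_add, Mq_add_transpose, hX]

lemma fQ_diag {X : Matrix (Fin 4) (Fin 4) (ZMod 2)} (d : Fin 4 → ZMod 2) (j : Fin 4) :
    (Xᵀ * Mq d * X) j j = Mq (fQ X d) j j := by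
  rw [Mq_diag]; rfl

lemma fQ_congr {X : Matrix (Fin 4) (Fin 4) (ZMod 2)} (hX : Xᵀ * J4 * X = J4)
    (d : Fin 4 → ZMod 2) (v : Fin 4 → ZMod 2) :
    Qf (Mq (fQ X d)) v = Qf (Mq d) (X.mulVec v) := by
  rw [mulVec_q]
  exact (qcongr _ _ (fQ_diag d) (by rw [symm_conj hX, Mq_add_transpose]) v).symm

lemma fQ_mul {X : Matrix (Fin 4) (Fin 4) (ZMod 2)} (hX : Xᵀ * J4 * X = J4)
    (Y : Matrix (Fin 4) (Fin 4) (ZMod 2)) (d : Fin 4 → ZMod 2) :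
    fQ (X * Y) d = fQ Y (fQ X d) := by
  funext i
  show ((X * Y)ᵀ * Mq d * (X * Y)) i i = (Yᵀ * Mq (fQ X d) * Y) i i
  have e1 : (X * Y)ᵀ * Mq d * (X * Y) = Yᵀ * (Xᵀ * Mq d * X) * Y := by
    rw [Matrix.transpose_mul]
    simp only [Matrix.mul_assoc, Matrix.transpose_transpose]
  rw [e1, diag_eq, diag_eq]
  exact qcongr _ _ (fQ_diag d) (by rw [symm_conj hX, Mq_add_transpose]) _

lemma fQ_one (d : Fin 4 → ZMod 2) : fQ 1 d = d := by
  funext i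
  unfold fQ
  rw [Matrix.transpose_one, Matrix.one_mul, Matrix.mul_one, Mq_diag]

lemma det_unit {X : Matrix (Fin 4) (Fin 4) (ZMod 2)} (hX : Xᵀ * J4 * X = J4) :
    IsUnit X.det := by
  have hJ : J4.det = 1 := by decide
  have h := congrArg Matrix.det hX
  rw [Matrix.det_mul, Matrix.det_mul, Matrix.det_transpose, hJ, mul_one] at h
  exact IsUnit.of_mul_eq_one _ h

lemma inv_symp {X : Matrix (Fin 4) (Fin 4) (ZMod 2)} (hX : Xᵀ * J4 * X = J4) :
    (X⁻¹)ᵀ * J4 * X⁻¹ = J4 := by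
  have h1 : X * X⁻¹ = 1 := Matrix.mul_nonsing_inv _ (det_unit hX)
  calc (X⁻¹)ᵀ * J4 * X⁻¹ = (X⁻¹)ᵀ * (Xᵀ * J4 * X) * X⁻¹ := by rw [hX]
    _ = (X * X⁻¹)ᵀ * J4 * (X * X⁻¹) := by
        rw [Matrix.transpose_mul]
        simp only [Matrix.mul_assoc, Matrix.transpose_transpose]
    _ = J4 := by rw [h1, Matrix.transpose_one, Matrix.one_mul, Matrix.mul_one]

lemma mul_symp {X Y : Matrix (Fin 4) (Fin 4) (ZMod 2)} (hX : Xᵀ * J4 * X = J4)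
    (hY : Yᵀ * J4 * Y = J4) : (X * Y)ᵀ * J4 * (X * Y) = J4 := by
  calc (X * Y)ᵀ * J4 * (X * Y) = Yᵀ * (Xᵀ * J4 * X) * Y := by
        rw [Matrix.transpose_mul]
        simp only [Matrix.mul_assoc, Matrix.transpose_transpose]
    _ = J4 := by rw [hX, hY]

lemma card_inv {X : Matrix (Fin 4) (Fin 4) (ZMod 2)} (hX : Xᵀ * J4 * X = J4)
    (d : Fin 4 → ZMod 2) :
    (Finset.univ.filter fun v : Fin 4 → ZMod 2 => Qf (Mq (fQ X d)) v = 0).card =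
    (Finset.univ.filter fun v : Fin 4 → ZMod 2 => Qf (Mq d) v = 0).card := by
  have hdet := det_unit hX
  refine Finset.card_equiv
    ⟨X.mulVec, X⁻¹.mulVec,
      fun v => by rw [Matrix.mulVec_mulVec, Matrix.nonsing_inv_mul _ hdet, Matrix.one_mulVec],
      fun v => by rw [Matrix.mulVec_mulVec, Matrix.mul_nonsing_inv _ hdet, Matrix.one_mulVec]⟩
    (fun v => ?_)
  simp only [Finset.mem_filter, Finset.mem_univ, true_and, Equiv.coe_fn_mk]
  rw [fQ_congr hX]

lemma Podd_iff {X : Matrix (Fin 4) (Fin 4) (ZMod 2)} (hX : Xᵀ * J4 * X = J4)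
    (d : Fin 4 → ZMod 2) : Podd (fQ X d) ↔ Podd d := by
  unfold Podd
  rw [card_inv hX]

/-- The permutation induced by `T4` on the odd quadratic forms. -/
def eT : Equiv.Perm {d : Fin 4 → ZMod 2 // Podd d} :=
  { toFun := fun d => ⟨fQ T4 d.1, by
      have h : ∀ d, Podd d → Podd (fQ T4 d) := by decide
      exact h d.1 d.2⟩
    invFun := fun d => ⟨fQ T4 d.1, by
      have h : ∀ d, Podd d → Podd (fQ T4 d) := by decide
      exact h d.1 d.2⟩
    left_inv := fun d => Subtype.ext (by
      have h : ∀ d, fQ T4 (fQ T4 d) = d := by decide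
      exact h d.1)
    right_inv := fun d => Subtype.ext (by
      have h : ∀ d, fQ T4 (fQ T4 d) = d := by decide
      exact h d.1) }

def da : {d : Fin 4 → ZMod 2 // Podd d} := ⟨![0, 0, 1, 1], by decide⟩
def db : {d : Fin 4 → ZMod 2 // Podd d} := ⟨![0, 1, 1, 1], by decide⟩

lemma sign_eT : Equiv.Perm.sign eT = -1 := by
  have heq : eT = Equiv.swap da db := by
    apply Equiv.ext
    decide
  have hne : da ≠ db := by decide
  rw [heq, Equiv.Perm.sign_swap hne]

/-- `T` is not a commutator in `Sp(4,𝔽₂)`. -/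
theorem stmt_4 :
    ¬ ∃ X Y : Matrix (Fin 4) (Fin 4) (ZMod 2),
        Xᵀ * J4 * X = J4 ∧ Yᵀ * J4 * Y = J4 ∧ X * Y * X⁻¹ * Y⁻¹ = T4 := by
  rintro ⟨X, Y, hX, hY, hc⟩
  have hXi : (X⁻¹)ᵀ * J4 * X⁻¹ = J4 := inv_symp hX
  have hYi : (Y⁻¹)ᵀ * J4 * Y⁻¹ = J4 := inv_symp hY
  have hdX := det_unit hX
  have hdY := det_unit hY
  -- the permutations induced by X and Y on odd quadratic forms
  let eX : Equiv.Perm {d : Fin 4 → ZMod 2 // Podd d} :=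
    { toFun := fun d => ⟨fQ X d.1, (Podd_iff hX d.1).mpr d.2⟩
      invFun := fun d => ⟨fQ X⁻¹ d.1, (Podd_iff hXi d.1).mpr d.2⟩
      left_inv := fun d => Subtype.ext (by
        show fQ X⁻¹ (fQ X d.1) = d.1
        rw [← fQ_mul hX, Matrix.mul_nonsing_inv _ hdX, fQ_one])
      right_inv := fun d => Subtype.ext (by
        show fQ X (fQ X⁻¹ d.1) = d.1
        rw [← fQ_mul hXi, Matrix.nonsing_inv_mul _ hdX, fQ_one]) }
  let eY : Equiv.Perm {d : Fin 4 → ZMod 2 // Podd d} :=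
    { toFun := fun d => ⟨fQ Y d.1, (Podd_iff hY d.1).mpr d.2⟩
      invFun := fun d => ⟨fQ Y⁻¹ d.1, (Podd_iff hYi d.1).mpr d.2⟩
      left_inv := fun d => Subtype.ext (by
        show fQ Y⁻¹ (fQ Y d.1) = d.1
        rw [← fQ_mul hY, Matrix.mul_nonsing_inv _ hdY, fQ_one])
      right_inv := fun d => Subtype.ext (by
        show fQ Y (fQ Y⁻¹ d.1) = d.1
        rw [← fQ_mul hYi, Matrix.nonsing_inv_mul _ hdY, fQ_one]) }
  have h2 : (X * Y)ᵀ * J4 * (X * Y) = J4 := mul_symp hX hY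
  have h3 : (X * Y * X⁻¹)ᵀ * J4 * (X * Y * X⁻¹) = J4 := mul_symp h2 hXi
  have h1 : ∀ d, fQ T4 d = fQ Y⁻¹ (fQ X⁻¹ (fQ Y (fQ X d))) := by
    intro d
    rw [← hc, fQ_mul h3, fQ_mul h2, fQ_mul hX]
  have hE : eT = eY.symm * eX.symm * eY * eX := by
    apply Equiv.ext
    intro d
    exact Subtype.ext (h1 d.1)
  have hs := congrArg Equiv.Perm.sign hE
  rw [sign_eT, _root_.map_mul, _root_.map_mul, _root_.map_mul,
      show eY.symm = eY⁻¹ from rfl, show eX.symm = eX⁻¹ from rfl,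
      _root_.map_inv, _root_.map_inv] at hs
  have h4 : ∀ a b : ℤˣ, a⁻¹ * b⁻¹ * a * b = 1 := by decide
  rw [h4] at hs
  exact absurd hs (by decide)
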